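/- Let 1 ≤ p < 2 < q ≤ ∞ and 0 < θ < 1 satisfy θ/p + (1-θ)/q = 1/2. There exists C > 0 such that if w ∈ L^p(ℝ²) ∩ L^q(ℝ²) and v is defined by the Biot-Savart law v(ξ) = (1/2π) ∫_{ℝ²} (ξ-η)^⊥ / |ξ-η|² · w(η) dη, then v ∈ L^∞(ℝ²) and ‖v‖_∞ ≤ C ‖w‖_p^θ ‖w‖_q^{1-θ}. -/

import Mathlib

open Real MeasureTheory
open scoped ENNReal

noncomputable section

abbrev E2 := EuclideanSpace ℝ (Fin 2)

def perp (x : E2) : E2 := (EuclideanSpace.equiv (Fin 2) ℝ).symm ![-(x 1), x 0]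

open Metric Set
open scoped NNReal

lemma ofReal_norm_eq_coe_nnnorm {F : Type*} [SeminormedAddGroup F] (a : F) :
    ENNReal.ofReal ‖a‖ = (‖a‖₊ : ℝ≥0∞) := ofReal_norm a

lemma norm_perp (x : E2) : ‖perp x‖ = ‖x‖ := by
  rw [EuclideanSpace.norm_eq, EuclideanSpace.norm_eq]
  congr 1
  rw [Fin.sum_univ_two, Fin.sum_univ_two]
  have h0 : perp x 0 = -(x 1) := rfl
  have h1 : perp x 1 = x 0 := rfl
  rw [h0, h1]
  simp [norm_neg]
  ring

lemma continuous_perp : Continuous perp := by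
  have hc : ∀ i : Fin 2, Continuous fun x : E2 => x i := fun i =>
    (continuous_apply i).comp (EuclideanSpace.equiv (Fin 2) ℝ).continuous
  refine (EuclideanSpace.equiv (Fin 2) ℝ).symm.continuous.comp ?_
  refine continuous_pi fun i => ?_
  fin_cases i
  · exact (hc 1).neg
  · simpa using hc 0

def ballC (a : ℝ) : ℝ≥0∞ :=
  ENNReal.ofReal (2 ^ a) * volume (ball (0:E2) 1) * (1 - ENNReal.ofReal (2 ^ (a-2)))⁻¹

def compC (a : ℝ) : ℝ≥0∞ :=
  ENNReal.ofReal (4 : ℝ) * volume (ball (0:E2) 1) * (1 - ENNReal.ofReal (2 ^ (2-a)))⁻¹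

lemma ballC_ne_top {a : ℝ} (ha : a < 2) : ballC a ≠ ∞ := by
  have h1 : (2:ℝ) ^ (a - 2) < 1 :=
    Real.rpow_lt_one_of_one_lt_of_neg one_lt_two (by linarith)
  have h3 : (1 - ENNReal.ofReal (2 ^ (a-2))) ≠ 0 := by
    simp only [ne_eq, tsub_eq_zero_iff_le, not_le]
    exact ENNReal.ofReal_lt_one.2 h1
  exact ENNReal.mul_ne_top (ENNReal.mul_ne_top ENNReal.ofReal_ne_top
    (measure_ball_lt_top).ne) (ENNReal.inv_ne_top.2 h3)

lemma compC_ne_top {a : ℝ} (ha : 2 < a) : compC a ≠ ∞ := by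
  have h1 : (2:ℝ) ^ (2 - a) < 1 :=
    Real.rpow_lt_one_of_one_lt_of_neg one_lt_two (by linarith)
  have h3 : (1 - ENNReal.ofReal (2 ^ (2-a))) ≠ 0 := by
    simp only [ne_eq, tsub_eq_zero_iff_le, not_le]
    exact ENNReal.ofReal_lt_one.2 h1
  exact ENNReal.mul_ne_top (ENNReal.mul_ne_top ENNReal.ofReal_ne_top
    (measure_ball_lt_top).ne) (ENNReal.inv_ne_top.2 h3)

lemma volume_E2_ball (c : E2) {r : ℝ} (hr : 0 ≤ r) :
    volume (ball c r) = ENNReal.ofReal (r ^ 2) * volume (ball (0:E2) 1) := by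
  rw [Measure.addHaar_ball _ _ hr]
  congr 2
  simp [finrank_euclideanSpace_fin]

lemma pow_bound_le {x c : ℝ} {a : ℝ} (ha0 : 0 < a) (hc : 0 < c) (h1 : c ≤ x) (z : E2)
    (hz : c ≤ ‖z‖) : ((‖z‖₊ : ℝ≥0∞)⁻¹) ^ a ≤ ENNReal.ofReal (c ^ (-a)) := by
  rw [Real.rpow_neg hc.le, ENNReal.ofReal_inv_of_pos (Real.rpow_pos_of_pos hc a),
    ← ENNReal.ofReal_rpow_of_pos hc, ENNReal.inv_rpow]
  refine ENNReal.inv_le_inv.2 (ENNReal.rpow_le_rpow ?_ ha0.le)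
  calc ENNReal.ofReal c ≤ ENNReal.ofReal ‖z‖ := ENNReal.ofReal_le_ofReal hz
    _ = (‖z‖₊ : ℝ≥0∞) := ofReal_norm_eq_coe_nnnorm z

lemma kernel_ball_bound {a : ℝ} (ha0 : 0 < a) (ha2 : a < 2) {R : ℝ} (hR : 0 < R) :
    ∫⁻ z in ball (0:E2) R, ((‖z‖₊ : ℝ≥0∞)⁻¹) ^ a ∂volume
      ≤ ballC a * ENNReal.ofReal (R ^ (2 - a)) := by
  set V := volume (ball (0:E2) 1) with hV
  set S : ℕ → Set E2 := fun n => {z : E2 | R * 2⁻¹ ^ (n+1) ≤ ‖z‖} ∩ ball 0 (R * 2⁻¹ ^ n)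
    with hS
  have hae : (ball (0:E2) R \ {0} : Set E2) =ᵐ[volume] (ball (0:E2) R : Set E2) := by
    refine diff_ae_eq_self.2 ?_
    exact measure_mono_null inter_subset_right (measure_singleton 0)
  rw [← setLIntegral_congr hae]
  have hcover : ball (0:E2) R \ {0} ⊆ ⋃ n, S n := by
    rintro z ⟨hzR, hz0⟩
    have hz : 0 < ‖z‖ := norm_pos_iff.2 (by simpa using hz0)
    have hzR' : ‖z‖ < R := mem_ball_zero_iff.1 hzR
    have hex : ∃ n : ℕ, R * 2⁻¹ ^ (n+1) ≤ ‖z‖ := by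
      obtain ⟨n, hn⟩ := exists_pow_lt_of_lt_one (div_pos hz hR) (by norm_num : (2:ℝ)⁻¹ < 1)
      have h1 : (2⁻¹:ℝ) ^ (n+1) ≤ 2⁻¹ ^ n :=
        pow_le_pow_of_le_one (by norm_num) (by norm_num) (Nat.le_succ n)
      have h2 : (2⁻¹:ℝ) ^ n * R < ‖z‖ := (lt_div_iff₀ hR).1 hn
      exact ⟨n, by nlinarith⟩
    refine mem_iUnion.2 ⟨Nat.find hex, Nat.find_spec hex, mem_ball_zero_iff.2 ?_⟩
    by_cases hn0 : Nat.find hex = 0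
    · rw [hn0]; simpa using hzR'
    · obtain ⟨k, hk⟩ := Nat.exists_eq_succ_of_ne_zero hn0
      have := Nat.find_min hex (m := k) (by omega)
      rw [hk]
      push_neg at this
      exact this
  have key : ∀ n : ℕ, (R * 2⁻¹ ^ (n+1)) ^ (-a) * (R * 2⁻¹ ^ n) ^ 2
      = (2 ^ a * R ^ (2-a)) * ((2:ℝ) ^ (a-2)) ^ n := by
    intro n
    have hd : (0:ℝ) < R * 2⁻¹ ^ n := by positivity
    have step1 : (R * 2⁻¹ ^ (n+1) : ℝ) = (R * 2⁻¹ ^ n) * 2⁻¹ := by ring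
    have hkd : ((R * 2⁻¹ ^ n) * 2⁻¹ : ℝ) ^ (-a) = (R * 2⁻¹ ^ n) ^ (-a) * 2 ^ a := by
      rw [Real.mul_rpow hd.le (by norm_num), Real.inv_rpow (by norm_num : (0:ℝ) ≤ 2),
        ← Real.rpow_neg (by norm_num : (0:ℝ) ≤ 2), neg_neg]
    have hda : (R * 2⁻¹ ^ n : ℝ) ^ (-a) * (R * 2⁻¹ ^ n) ^ 2 = (R * 2⁻¹ ^ n) ^ (2-a) := by
      rw [← Real.rpow_natCast (R * 2⁻¹ ^ n) 2, ← Real.rpow_add hd]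
      congr 1
      push_cast; ring
    have hsplit : (R * 2⁻¹ ^ n : ℝ) ^ (2-a) = R ^ (2-a) * ((2:ℝ) ^ (a-2)) ^ n := by
      rw [Real.mul_rpow hR.le (by positivity)]
      congr 1
      rw [← Real.rpow_natCast (2⁻¹:ℝ) n, ← Real.rpow_mul (by norm_num : (0:ℝ) ≤ 2⁻¹),
        mul_comm ((n:ℝ)) (2-a), Real.rpow_mul (by norm_num : (0:ℝ) ≤ 2⁻¹),
        Real.rpow_natCast]
      congr 1
      rw [Real.inv_rpow (by norm_num : (0:ℝ) ≤ 2), ← Real.rpow_neg (by norm_num : (0:ℝ) ≤ 2)]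
      congr 1
      ring
    calc (R * 2⁻¹ ^ (n+1)) ^ (-a) * (R * 2⁻¹ ^ n) ^ 2
        = ((R * 2⁻¹ ^ n) * 2⁻¹) ^ (-a) * (R * 2⁻¹ ^ n) ^ 2 := by rw [← step1]
      _ = ((R * 2⁻¹ ^ n) ^ (-a) * 2 ^ a) * (R * 2⁻¹ ^ n) ^ 2 := by rw [hkd]
      _ = 2 ^ a * ((R * 2⁻¹ ^ n) ^ (-a) * (R * 2⁻¹ ^ n) ^ 2) := by ring
      _ = 2 ^ a * (R ^ (2-a) * ((2:ℝ) ^ (a-2)) ^ n) := by rw [hda, hsplit]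
      _ = (2 ^ a * R ^ (2-a)) * ((2:ℝ) ^ (a-2)) ^ n := by ring
  calc ∫⁻ z in ball (0:E2) R \ {0}, ((‖z‖₊ : ℝ≥0∞)⁻¹) ^ a ∂volume
      ≤ ∫⁻ z in ⋃ n, S n, ((‖z‖₊ : ℝ≥0∞)⁻¹) ^ a ∂volume := lintegral_mono_set hcover
    _ ≤ ∑' n, ∫⁻ z in S n, ((‖z‖₊ : ℝ≥0∞)⁻¹) ^ a ∂volume := lintegral_iUnion_le _ _
    _ ≤ ∑' n, ENNReal.ofReal ((R * 2⁻¹ ^ (n+1)) ^ (-a) * (R * 2⁻¹ ^ n) ^ 2) * V := by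
        refine ENNReal.tsum_le_tsum fun n => ?_
        have hc : (0:ℝ) < R * 2⁻¹ ^ (n+1) := by positivity
        calc ∫⁻ z in S n, ((‖z‖₊ : ℝ≥0∞)⁻¹) ^ a ∂volume
            ≤ ∫⁻ _ in S n, ENNReal.ofReal ((R * 2⁻¹ ^ (n+1)) ^ (-a)) ∂volume :=
              setLIntegral_mono measurable_const
                (fun z hz => pow_bound_le ha0 hc le_rfl z hz.1)
          _ = ENNReal.ofReal ((R * 2⁻¹ ^ (n+1)) ^ (-a)) * volume (S n) := by
              rw [setLIntegral_const]
          _ ≤ ENNReal.ofReal ((R * 2⁻¹ ^ (n+1)) ^ (-a)) *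
                (ENNReal.ofReal ((R * 2⁻¹ ^ n) ^ 2) * V) := by
              refine mul_le_mul_right ?_ _
              rw [← volume_E2_ball 0 (by positivity)]
              exact measure_mono inter_subset_right
          _ = ENNReal.ofReal ((R * 2⁻¹ ^ (n+1)) ^ (-a) * (R * 2⁻¹ ^ n) ^ 2) * V := by
              rw [ENNReal.ofReal_mul (by positivity), mul_assoc]
    _ = ∑' n, (ENNReal.ofReal (2 ^ a * R ^ (2-a)) * ENNReal.ofReal ((2:ℝ) ^ (a-2)) ^ n) * V := by
        congr 1
        funext n
        rw [key n, ENNReal.ofReal_mul (by positivity), ENNReal.ofReal_pow (by positivity)]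
    _ = ENNReal.ofReal (2 ^ a * R ^ (2-a)) * (1 - ENNReal.ofReal ((2:ℝ) ^ (a-2)))⁻¹ * V := by
        rw [ENNReal.tsum_mul_right, ENNReal.tsum_mul_left, ENNReal.tsum_geometric]
    _ = ballC a * ENNReal.ofReal (R ^ (2 - a)) := by
        rw [ballC, ENNReal.ofReal_mul (by positivity)]
        ring

lemma kernel_compl_bound {a : ℝ} (ha : 2 < a) {R : ℝ} (hR : 0 < R) :
    ∫⁻ z in (ball (0:E2) R)ᶜ, ((‖z‖₊ : ℝ≥0∞)⁻¹) ^ a ∂volume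
      ≤ compC a * ENNReal.ofReal (R ^ (2 - a)) := by
  have ha0 : (0:ℝ) < a := by linarith
  set V := volume (ball (0:E2) 1) with hV
  set T : ℕ → Set E2 := fun n => {z : E2 | R * 2 ^ n ≤ ‖z‖} ∩ ball 0 (R * 2 ^ (n+1))
    with hT
  have hcover : (ball (0:E2) R)ᶜ ⊆ ⋃ n, T n := by
    intro z hz
    have hzR : R ≤ ‖z‖ := by
      simp only [mem_compl_iff, mem_ball, dist_zero_right, not_lt] at hz
      exact hz
    have hex : ∃ n : ℕ, ‖z‖ < R * 2 ^ (n+1) := by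
      obtain ⟨n, hn⟩ := pow_unbounded_of_one_lt (‖z‖ / R) (by norm_num : (1:ℝ) < 2)
      have : ‖z‖ / R < 2 ^ (n+1) := lt_of_lt_of_le hn (by
        exact pow_le_pow_right₀ (by norm_num) (Nat.le_succ n))
      exact ⟨n, by rwa [div_lt_iff₀ hR, mul_comm] at this⟩
    refine mem_iUnion.2 ⟨Nat.find hex, ?_, mem_ball_zero_iff.2 (Nat.find_spec hex)⟩
    by_cases hn0 : Nat.find hex = 0
    · rw [hn0]; simpa using hzR
    · obtain ⟨k, hk⟩ := Nat.exists_eq_succ_of_ne_zero hn0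
      have := Nat.find_min hex (m := k) (by omega)
      push_neg at this
      rw [hk]
      exact this
  have key : ∀ n : ℕ, (R * 2 ^ n) ^ (-a) * (R * 2 ^ (n+1)) ^ 2
      = (4 * R ^ (2-a)) * ((2:ℝ) ^ (2-a)) ^ n := by
    intro n
    have hd : (0:ℝ) < R * 2 ^ n := by positivity
    have hda : (R * 2 ^ n : ℝ) ^ (-a) * (R * 2 ^ n) ^ 2 = (R * 2 ^ n) ^ (2-a) := by
      rw [← Real.rpow_natCast (R * 2 ^ n) 2, ← Real.rpow_add hd]
      congr 1
      push_cast; ring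
    have hsplit : (R * 2 ^ n : ℝ) ^ (2-a) = R ^ (2-a) * ((2:ℝ) ^ (2-a)) ^ n := by
      rw [Real.mul_rpow hR.le (by positivity)]
      congr 1
      rw [← Real.rpow_natCast (2:ℝ) n, ← Real.rpow_mul (by norm_num : (0:ℝ) ≤ 2),
        mul_comm ((n:ℝ)) (2-a), Real.rpow_mul (by norm_num : (0:ℝ) ≤ 2),
        Real.rpow_natCast]
    calc (R * 2 ^ n) ^ (-a) * (R * 2 ^ (n+1)) ^ 2
        = (R * 2 ^ n) ^ (-a) * ((R * 2 ^ n) ^ 2 * 4) := by ring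
      _ = 4 * ((R * 2 ^ n) ^ (-a) * (R * 2 ^ n) ^ 2) := by ring
      _ = 4 * ((R * 2 ^ n) ^ (2-a)) := by rw [hda]
      _ = (4 * R ^ (2-a)) * ((2:ℝ) ^ (2-a)) ^ n := by rw [hsplit]; ring
  calc ∫⁻ z in (ball (0:E2) R)ᶜ, ((‖z‖₊ : ℝ≥0∞)⁻¹) ^ a ∂volume
      ≤ ∫⁻ z in ⋃ n, T n, ((‖z‖₊ : ℝ≥0∞)⁻¹) ^ a ∂volume := lintegral_mono_set hcover
    _ ≤ ∑' n, ∫⁻ z in T n, ((‖z‖₊ : ℝ≥0∞)⁻¹) ^ a ∂volume := lintegral_iUnion_le _ _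
    _ ≤ ∑' n, ENNReal.ofReal ((R * 2 ^ n) ^ (-a) * (R * 2 ^ (n+1)) ^ 2) * V := by
        refine ENNReal.tsum_le_tsum fun n => ?_
        have hc : (0:ℝ) < R * 2 ^ n := by positivity
        calc ∫⁻ z in T n, ((‖z‖₊ : ℝ≥0∞)⁻¹) ^ a ∂volume
            ≤ ∫⁻ _ in T n, ENNReal.ofReal ((R * 2 ^ n) ^ (-a)) ∂volume :=
              setLIntegral_mono measurable_const
                (fun z hz => pow_bound_le ha0 hc le_rfl z hz.1)
          _ = ENNReal.ofReal ((R * 2 ^ n) ^ (-a)) * volume (T n) := by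
              rw [setLIntegral_const]
          _ ≤ ENNReal.ofReal ((R * 2 ^ n) ^ (-a)) *
                (ENNReal.ofReal ((R * 2 ^ (n+1)) ^ 2) * V) := by
              refine mul_le_mul_right ?_ _
              rw [← volume_E2_ball 0 (by positivity)]
              exact measure_mono inter_subset_right
          _ = ENNReal.ofReal ((R * 2 ^ n) ^ (-a) * (R * 2 ^ (n+1)) ^ 2) * V := by
              rw [ENNReal.ofReal_mul (by positivity), mul_assoc]
    _ = ∑' n, (ENNReal.ofReal (4 * R ^ (2-a)) * ENNReal.ofReal ((2:ℝ) ^ (2-a)) ^ n) * V := by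
        congr 1
        funext n
        rw [key n, ENNReal.ofReal_mul (by positivity), ENNReal.ofReal_pow (by positivity)]
    _ = ENNReal.ofReal (4 * R ^ (2-a)) * (1 - ENNReal.ofReal ((2:ℝ) ^ (2-a)))⁻¹ * V := by
        rw [ENNReal.tsum_mul_right, ENNReal.tsum_mul_left, ENNReal.tsum_geometric]
    _ = compC a * ENNReal.ofReal (R ^ (2 - a)) := by
        rw [compC, ENNReal.ofReal_mul (by norm_num : (0:ℝ) ≤ 4)]
        ring
lemma lint_shift (ξ : E2) (f : E2 → ℝ≥0∞) (s : Set E2) :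
    ∫⁻ η in (fun η => ξ - η) ⁻¹' s, f (ξ - η) ∂volume = ∫⁻ z in s, f z ∂volume :=
  (Measure.measurePreserving_sub_left volume ξ).setLIntegral_comp_preimage_emb
    (MeasurableEquiv.subLeft ξ).measurableEmbedding f s

lemma preimage_ball (ξ : E2) (R : ℝ) :
    (fun η => ξ - η) ⁻¹' (ball 0 R) = ball ξ R := by
  ext z
  simp [mem_ball, dist_eq_norm, norm_sub_rev ξ z]

lemma near_bound (q : ℝ≥0∞) (hq : 2 < q) :
    ∃ A : ℝ≥0∞, A ≠ 0 ∧ A ≠ ∞ ∧ ∀ w : E2 → ℝ, AEMeasurable w volume → ∀ R : ℝ, 0 < R →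
      ∀ ξ : E2,
      ∫⁻ η in ball ξ R, (‖w η‖₊ : ℝ≥0∞) * (‖ξ - η‖₊ : ℝ≥0∞)⁻¹ ∂volume
        ≤ A * eLpNorm w q volume * ENNReal.ofReal (R ^ (1 - 2 * (q⁻¹).toReal)) := by
  have hker : ∀ R : ℝ, 0 < R → ∀ ξ : E2, ∀ b : ℝ, 0 < b → b < 2 →
      ∫⁻ η in ball ξ R, ((‖ξ - η‖₊ : ℝ≥0∞)⁻¹) ^ b ∂volume
        ≤ ballC b * ENNReal.ofReal (R ^ (2 - b)) := by
    intro R hR ξ b hb0 hb2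
    have := lint_shift ξ (fun z => ((‖z‖₊ : ℝ≥0∞)⁻¹) ^ b) (ball 0 R)
    rw [preimage_ball] at this
    rw [this]
    exact kernel_ball_bound hb0 hb2 hR
  rcases eq_or_ne q ∞ with hqt | hqt
  · -- q = ∞
    refine ⟨ballC 1 + 1, by simp,
      ENNReal.add_ne_top.2 ⟨ballC_ne_top one_lt_two, ENNReal.one_ne_top⟩,
      fun w _hw R hR ξ => ?_⟩
    subst hqt
    simp only [ENNReal.inv_top, ENNReal.toReal_zero, mul_zero, sub_zero]
    rcases eq_or_ne (eLpNorm w ⊤ volume) ∞ with hN | hN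
    · rw [hN]
      refine le_top.trans_eq ?_
      rw [ENNReal.mul_top (by simp), ENNReal.top_mul
        (ENNReal.ofReal_pos.2 (Real.rpow_pos_of_pos hR 1)).ne']
    · have hae : ∀ᵐ η ∂(volume.restrict (ball ξ R)),
          (‖w η‖₊ : ℝ≥0∞) * (‖ξ - η‖₊ : ℝ≥0∞)⁻¹
            ≤ eLpNorm w ⊤ volume * (‖ξ - η‖₊ : ℝ≥0∞)⁻¹ := by
        refine ae_restrict_of_ae ?_
        filter_upwards [ae_le_essSup (μ := volume) (f := fun η => (‖w η‖₊ : ℝ≥0∞))] with η hη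
        exact mul_le_mul_left (by rw [eLpNorm_exponent_top]; exact hη) _
      calc ∫⁻ η in ball ξ R, (‖w η‖₊ : ℝ≥0∞) * (‖ξ - η‖₊ : ℝ≥0∞)⁻¹ ∂volume
          ≤ ∫⁻ η in ball ξ R, eLpNorm w ⊤ volume * (‖ξ - η‖₊ : ℝ≥0∞)⁻¹ ∂volume :=
            lintegral_mono_ae hae
        _ = eLpNorm w ⊤ volume * ∫⁻ η in ball ξ R, (‖ξ - η‖₊ : ℝ≥0∞)⁻¹ ∂volume :=
            lintegral_const_mul' _ _ hN
        _ ≤ eLpNorm w ⊤ volume * (ballC 1 * ENNReal.ofReal (R ^ (1:ℝ))) := by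
            refine mul_le_mul_right ?_ _
            have := hker R hR ξ 1 one_pos one_lt_two
            simp only [ENNReal.rpow_one] at this
            convert this using 3
            norm_num
        _ ≤ (ballC 1 + 1) * eLpNorm w ⊤ volume * ENNReal.ofReal (R ^ (1:ℝ)) := by
            rw [mul_comm (ballC 1 + 1) _, mul_assoc]
            exact mul_le_mul_right (mul_le_mul_left (le_add_right le_rfl) _) _
  · -- q finite
    have hq0 : q ≠ 0 := by positivity
    have hqt2 : (2:ℝ) < q.toReal := by
      have := ENNReal.toReal_lt_toReal (by norm_num : (2:ℝ≥0∞) ≠ ∞) hqt |>.2 hq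
      simpa using this
    set qt := q.toReal with hqtdef
    set q' := qt / (qt - 1) with hq'def
    have hq'1 : 1 < q' := by
      rw [hq'def, lt_div_iff₀ (by linarith)]
      linarith
    have hq'2 : q' < 2 := by
      rw [hq'def, div_lt_iff₀ (by linarith)]
      linarith
    have hconj : qt.HolderConjugate q' := by
      exact Real.HolderConjugate.conjExponent (by linarith)
    refine ⟨(ballC q') ^ (1/q') + 1, by simp,
      ENNReal.add_ne_top.2 ⟨ENNReal.rpow_ne_top_of_nonneg (by positivity) (ballC_ne_top hq'2),
        ENNReal.one_ne_top⟩, fun w hw R hR ξ => ?_⟩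
    have holder := ENNReal.lintegral_mul_le_Lp_mul_Lq (volume.restrict (ball ξ R)) hconj
      (f := fun η => (‖w η‖₊ : ℝ≥0∞)) (g := fun η => (‖ξ - η‖₊ : ℝ≥0∞)⁻¹)
      (hw.restrict.enorm)
      (((measurable_const.sub measurable_id).enorm).inv).aemeasurable
    have hfac1 : (∫⁻ η in ball ξ R, (‖w η‖₊ : ℝ≥0∞) ^ qt ∂volume) ^ (1/qt)
        ≤ eLpNorm w q volume := by
      rw [eLpNorm_eq_lintegral_rpow_enorm_toReal hq0 hqt]
      exact ENNReal.rpow_le_rpow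
        (lintegral_mono' Measure.restrict_le_self le_rfl) (by positivity)
    have hfac2 : (∫⁻ η in ball ξ R, ((‖ξ - η‖₊ : ℝ≥0∞)⁻¹) ^ q' ∂volume) ^ (1/q')
        ≤ (ballC q') ^ (1/q') * ENNReal.ofReal (R ^ (1 - 2 * (q⁻¹).toReal)) := by
      have h1 := hker R hR ξ q' (by linarith) hq'2
      have h2 := ENNReal.rpow_le_rpow h1 (le_of_lt (by positivity : (0:ℝ) < 1/q'))
      refine le_trans h2 (le_of_eq ?_)
      have h1 : qt - 1 ≠ 0 := by linarith
      have h2 : qt ≠ 0 := by linarith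
      have hexp : (2 - q') * (1/q') = 1 - 2 * qt⁻¹ := by
        rw [hq'def]
        field_simp
        ring
      rw [ENNReal.mul_rpow_of_nonneg _ _ (by positivity),
        ENNReal.ofReal_rpow_of_pos (Real.rpow_pos_of_pos hR _),
        ← Real.rpow_mul hR.le, ENNReal.toReal_inv, hexp]
    calc ∫⁻ η in ball ξ R, (‖w η‖₊ : ℝ≥0∞) * (‖ξ - η‖₊ : ℝ≥0∞)⁻¹ ∂volume
        ≤ (∫⁻ η in ball ξ R, (‖w η‖₊ : ℝ≥0∞) ^ qt ∂volume) ^ (1/qt) *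
          (∫⁻ η in ball ξ R, ((‖ξ - η‖₊ : ℝ≥0∞)⁻¹) ^ q' ∂volume) ^ (1/q') := holder
      _ ≤ eLpNorm w q volume *
          ((ballC q') ^ (1/q') * ENNReal.ofReal (R ^ (1 - 2 * (q⁻¹).toReal))) :=
          mul_le_mul' hfac1 hfac2
      _ ≤ ((ballC q') ^ (1/q') + 1) * eLpNorm w q volume *
          ENNReal.ofReal (R ^ (1 - 2 * (q⁻¹).toReal)) := by
          rw [mul_comm _ (eLpNorm w q volume), mul_assoc]
          exact mul_le_mul_right (mul_le_mul_left (le_add_right le_rfl) _) _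
lemma preimage_ball_compl (ξ : E2) (R : ℝ) :
    (fun η => ξ - η) ⁻¹' (ball 0 R)ᶜ = (ball ξ R)ᶜ := by
  rw [preimage_compl, preimage_ball]

lemma far_bound (p : ℝ≥0∞) (hp1 : 1 ≤ p) (hp2 : p < 2) :
    ∃ B : ℝ≥0∞, B ≠ 0 ∧ B ≠ ∞ ∧ ∀ w : E2 → ℝ, AEMeasurable w volume → ∀ R : ℝ, 0 < R →
      ∀ ξ : E2,
      ∫⁻ η in (ball ξ R)ᶜ, (‖w η‖₊ : ℝ≥0∞) * (‖ξ - η‖₊ : ℝ≥0∞)⁻¹ ∂volume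
        ≤ B * eLpNorm w p volume * ENNReal.ofReal (R ^ (1 - 2 * (p⁻¹).toReal)) := by
  have hker : ∀ R : ℝ, 0 < R → ∀ ξ : E2, ∀ b : ℝ, 2 < b →
      ∫⁻ η in (ball ξ R)ᶜ, ((‖ξ - η‖₊ : ℝ≥0∞)⁻¹) ^ b ∂volume
        ≤ compC b * ENNReal.ofReal (R ^ (2 - b)) := by
    intro R hR ξ b hb
    have := lint_shift ξ (fun z => ((‖z‖₊ : ℝ≥0∞)⁻¹) ^ b) (ball 0 R)ᶜ
    rw [preimage_ball_compl] at this
    rw [this]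
    exact kernel_compl_bound hb hR
  rcases eq_or_ne p 1 with hp1' | hp1'
  · -- p = 1
    refine ⟨1, one_ne_zero, ENNReal.one_ne_top, fun w _hw R hR ξ => ?_⟩
    subst hp1'
    simp only [inv_one, ENNReal.toReal_one, mul_one, one_mul]
    have hRpow : ENNReal.ofReal (R ^ (1 - 2 : ℝ)) = ENNReal.ofReal R⁻¹ := by
      congr 1
      rw [show (1 - 2 : ℝ) = -1 by norm_num, Real.rpow_neg_one]
    rw [hRpow]
    have hb : ∀ η ∈ (ball ξ R)ᶜ,
        (‖w η‖₊ : ℝ≥0∞) * (‖ξ - η‖₊ : ℝ≥0∞)⁻¹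
          ≤ ENNReal.ofReal R⁻¹ * (‖w η‖₊ : ℝ≥0∞) := by
      intro η hη
      have hdist : R ≤ ‖ξ - η‖ := by
        simp only [mem_compl_iff, mem_ball, not_lt] at hη
        rw [norm_sub_rev]
        rwa [dist_eq_norm] at hη
      rw [mul_comm]
      refine mul_le_mul_left ?_ _
      rw [ENNReal.ofReal_inv_of_pos hR]
      refine ENNReal.inv_le_inv.2 ?_
      calc ENNReal.ofReal R ≤ ENNReal.ofReal ‖ξ - η‖ := ENNReal.ofReal_le_ofReal hdist
        _ = (‖ξ - η‖₊ : ℝ≥0∞) := ofReal_norm_eq_coe_nnnorm _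
    calc ∫⁻ η in (ball ξ R)ᶜ, (‖w η‖₊ : ℝ≥0∞) * (‖ξ - η‖₊ : ℝ≥0∞)⁻¹ ∂volume
        ≤ ∫⁻ η in (ball ξ R)ᶜ, ENNReal.ofReal R⁻¹ * (‖w η‖₊ : ℝ≥0∞) ∂volume := by
          refine setLIntegral_mono' measurableSet_ball.compl hb
      _ = ENNReal.ofReal R⁻¹ * ∫⁻ η in (ball ξ R)ᶜ, (‖w η‖₊ : ℝ≥0∞) ∂volume :=
          lintegral_const_mul' _ _ ENNReal.ofReal_ne_top
      _ ≤ ENNReal.ofReal R⁻¹ * eLpNorm w 1 volume := by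
          refine mul_le_mul_right ?_ _
          rw [eLpNorm_one_eq_lintegral_enorm]
          exact lintegral_mono' Measure.restrict_le_self le_rfl
      _ = eLpNorm w 1 volume * ENNReal.ofReal R⁻¹ := by ring
  · -- 1 < p < 2
    have hp0 : p ≠ 0 := by positivity
    have hpt : p ≠ ∞ := hp2.ne_top
    have hpt1 : (1:ℝ) < p.toReal := by
      have := ENNReal.toReal_lt_toReal (by norm_num : (1:ℝ≥0∞) ≠ ∞) hpt |>.2
        (lt_of_le_of_ne hp1 (Ne.symm hp1'))
      simpa using this
    have hpt2 : p.toReal < 2 := by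
      have := ENNReal.toReal_lt_toReal hpt (by norm_num : (2:ℝ≥0∞) ≠ ∞) |>.2 hp2
      simpa using this
    set pt := p.toReal with hptdef
    set p' := pt / (pt - 1) with hp'def
    have hp'2 : 2 < p' := by
      rw [hp'def, lt_div_iff₀ (by linarith)]
      linarith
    have hconj : pt.HolderConjugate p' := by
      exact Real.HolderConjugate.conjExponent (by linarith)
    refine ⟨(compC p') ^ (1/p') + 1, by simp,
      ENNReal.add_ne_top.2 ⟨ENNReal.rpow_ne_top_of_nonneg (by positivity) (compC_ne_top hp'2),
        ENNReal.one_ne_top⟩, fun w hw R hR ξ => ?_⟩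
    have holder := ENNReal.lintegral_mul_le_Lp_mul_Lq (volume.restrict (ball ξ R)ᶜ) hconj
      (f := fun η => (‖w η‖₊ : ℝ≥0∞)) (g := fun η => (‖ξ - η‖₊ : ℝ≥0∞)⁻¹)
      (hw.restrict.enorm)
      (((measurable_const.sub measurable_id).enorm).inv).aemeasurable
    have hfac1 : (∫⁻ η in (ball ξ R)ᶜ, (‖w η‖₊ : ℝ≥0∞) ^ pt ∂volume) ^ (1/pt)
        ≤ eLpNorm w p volume := by
      rw [eLpNorm_eq_lintegral_rpow_enorm_toReal hp0 hpt]
      exact ENNReal.rpow_le_rpow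
        (lintegral_mono' Measure.restrict_le_self le_rfl) (by positivity)
    have hfac2 : (∫⁻ η in (ball ξ R)ᶜ, ((‖ξ - η‖₊ : ℝ≥0∞)⁻¹) ^ p' ∂volume) ^ (1/p')
        ≤ (compC p') ^ (1/p') * ENNReal.ofReal (R ^ (1 - 2 * (p⁻¹).toReal)) := by
      have h1 := hker R hR ξ p' hp'2
      have h2 := ENNReal.rpow_le_rpow h1 (le_of_lt (by positivity : (0:ℝ) < 1/p'))
      refine le_trans h2 (le_of_eq ?_)
      have h3 : pt - 1 ≠ 0 := by linarith
      have h4 : pt ≠ 0 := by linarith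
      have hexp : (2 - p') * (1/p') = 1 - 2 * pt⁻¹ := by
        rw [hp'def]
        field_simp
        ring
      rw [ENNReal.mul_rpow_of_nonneg _ _ (by positivity),
        ENNReal.ofReal_rpow_of_pos (Real.rpow_pos_of_pos hR _),
        ← Real.rpow_mul hR.le, ENNReal.toReal_inv, hexp]
    calc ∫⁻ η in (ball ξ R)ᶜ, (‖w η‖₊ : ℝ≥0∞) * (‖ξ - η‖₊ : ℝ≥0∞)⁻¹ ∂volume
        ≤ (∫⁻ η in (ball ξ R)ᶜ, (‖w η‖₊ : ℝ≥0∞) ^ pt ∂volume) ^ (1/pt) *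
          (∫⁻ η in (ball ξ R)ᶜ, ((‖ξ - η‖₊ : ℝ≥0∞)⁻¹) ^ p' ∂volume) ^ (1/p') := holder
      _ ≤ eLpNorm w p volume *
          ((compC p') ^ (1/p') * ENNReal.ofReal (R ^ (1 - 2 * (p⁻¹).toReal))) :=
          mul_le_mul' hfac1 hfac2
      _ ≤ ((compC p') ^ (1/p') + 1) * eLpNorm w p volume *
          ENNReal.ofReal (R ^ (1 - 2 * (p⁻¹).toReal)) := by
          rw [mul_comm _ (eLpNorm w p volume), mul_assoc]
          exact mul_le_mul_right (mul_le_mul_left (le_add_right le_rfl) _) _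
lemma enorm_integrand (w : E2 → ℝ) (ξ η : E2) (hne : η ≠ ξ) :
    (‖(w η / ‖ξ - η‖ ^ 2) • perp (ξ - η)‖₊ : ℝ≥0∞)
      = (‖w η‖₊ : ℝ≥0∞) * (‖ξ - η‖₊ : ℝ≥0∞)⁻¹ := by
  have hz : ξ - η ≠ 0 := sub_ne_zero.2 (Ne.symm hne)
  have hzn : 0 < ‖ξ - η‖ := norm_pos_iff.2 hz
  have hzn' : ‖ξ - η‖ ≠ 0 := hzn.ne'
  have hnorm : ‖(w η / ‖ξ - η‖ ^ 2) • perp (ξ - η)‖ = ‖w η‖ * ‖ξ - η‖⁻¹ := by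
    rw [norm_smul, norm_perp, Real.norm_eq_abs (w η / _), abs_div, abs_pow, abs_norm,
      Real.norm_eq_abs]
    field_simp
  rw [← ofReal_norm_eq_coe_nnnorm, hnorm, ENNReal.ofReal_mul (norm_nonneg _),
    ofReal_norm_eq_coe_nnnorm, ENNReal.ofReal_inv_of_pos hzn, ofReal_norm_eq_coe_nnnorm]

/-- interpolation estimate `‖v‖_∞ ≤ C ‖w‖_p^θ ‖w‖_q^{1-θ}` for the
Biot-Savart velocity `v = K_{BS} ⋆ w`, where `1 ≤ p < 2 < q ≤ ∞` and
`θ/p + (1-θ)/q = 1/2`. -/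
theorem stmt3 (p q : ℝ≥0∞) (θ : ℝ) (hp : 1 ≤ p) (hp2 : p < 2) (hq : 2 < q)
    (hθ0 : 0 < θ) (hθ1 : θ < 1)
    (hpqθ : θ * (p⁻¹).toReal + (1 - θ) * (q⁻¹).toReal = 1 / 2) :
    ∃ C : ℝ, 0 < C ∧ ∀ w : E2 → ℝ, ∀ v : E2 → E2,
      MemLp w p volume → MemLp w q volume →
      (∀ ξ, v ξ = (2 * π)⁻¹ • ∫ η, (w η / ‖ξ - η‖ ^ 2) • perp (ξ - η)) →
      MemLp v ⊤ volume ∧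
        eLpNorm v ⊤ volume ≤
          ENNReal.ofReal C * eLpNorm w p volume ^ θ * eLpNorm w q volume ^ (1 - θ) := by
  obtain ⟨A, hA0, hAt, hnear⟩ := near_bound q hq
  obtain ⟨B, hB0, hBt, hfar⟩ := far_bound p hp hp2
  have hXt : ENNReal.ofReal (2*π)⁻¹ * (A + B) ≠ ∞ :=
    ENNReal.mul_ne_top ENNReal.ofReal_ne_top (ENNReal.add_ne_top.2 ⟨hAt, hBt⟩)
  refine ⟨(ENNReal.ofReal (2*π)⁻¹ * (A + B)).toReal + 1, by positivity,
    fun w v hwp hwq hv => ?_⟩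
  set C : ℝ := (ENNReal.ofReal (2*π)⁻¹ * (A + B)).toReal + 1 with hC
  -- measurability of v
  have hw := hwp.aestronglyMeasurable
  have hww' : w =ᵐ[volume] hw.mk w := hw.ae_eq_mk
  have hw'm : StronglyMeasurable (hw.mk w) := hw.stronglyMeasurable_mk
  have hFm : StronglyMeasurable fun pr : E2 × E2 =>
      (hw.mk w pr.2 / ‖pr.1 - pr.2‖ ^ 2) • perp (pr.1 - pr.2) := by
    refine Measurable.stronglyMeasurable ?_
    refine Measurable.fun_smul ?_ ?_
    · exact (hw'm.measurable.comp measurable_snd).div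
        (((measurable_fst.sub measurable_snd).norm).pow_const 2)
    · exact continuous_perp.measurable.comp (measurable_fst.sub measurable_snd)
  have hvm : StronglyMeasurable v := by
    have hveq : v = fun ξ => (2*π)⁻¹ • ∫ η, (hw.mk w η / ‖ξ - η‖ ^ 2) • perp (ξ - η) := by
      funext ξ
      rw [hv ξ]
      congr 1
      refine integral_congr_ae ?_
      filter_upwards [hww'] with η hη
      rw [hη]
    rw [hveq]
    exact (hFm.integral_prod_right').const_smul ((2*π)⁻¹)
  have hp0 : p ≠ 0 := by positivity
  -- degenerate case
  by_cases hNp0 : eLpNorm w p volume = 0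
  · have hw0 : w =ᵐ[volume] 0 := (eLpNorm_eq_zero_iff hw hp0).1 hNp0
    have hv0 : v = 0 := by
      funext ξ
      rw [hv ξ]
      have hz : ∫ η, (w η / ‖ξ - η‖ ^ 2) • perp (ξ - η) ∂volume = 0 := by
        refine integral_eq_zero_of_ae ?_
        filter_upwards [hw0] with η hη
        simp [hη]
      rw [hz, smul_zero]
      rfl
    rw [hv0]
    refine ⟨MemLp.zero, ?_⟩
    rw [eLpNorm_zero]
    exact zero_le
  -- main case
  have hNpt : eLpNorm w p volume ≠ ∞ := hwp.2.ne
  have hNqt : eLpNorm w q volume ≠ ∞ := hwq.2.ne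
  have hNq0 : eLpNorm w q volume ≠ 0 := by
    intro h
    refine hNp0 ?_
    have hw0 : w =ᵐ[volume] 0 := (eLpNorm_eq_zero_iff hw (by positivity)).1 h
    calc eLpNorm w p volume = eLpNorm (0 : E2 → ℝ) p volume := eLpNorm_congr_ae hw0
      _ = 0 := eLpNorm_zero
  set np := (eLpNorm w p volume).toReal with hnpdef
  set nq := (eLpNorm w q volume).toReal with hnqdef
  have hnp0 : 0 < np := ENNReal.toReal_pos hNp0 hNpt
  have hnq0 : 0 < nq := ENNReal.toReal_pos hNq0 hNqt
  have hNp : eLpNorm w p volume = ENNReal.ofReal np := (ENNReal.ofReal_toReal hNpt).symm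
  have hNq : eLpNorm w q volume = ENNReal.ofReal nq := (ENNReal.ofReal_toReal hNqt).symm
  set α : ℝ := 1 - 2 * (q⁻¹).toReal with hα
  set β : ℝ := 2 * (p⁻¹).toReal - 1 with hβ
  have hαpos : 0 < α := by
    have h2q : q⁻¹ < 2⁻¹ := by
      rw [ENNReal.inv_lt_inv]
      exact hq
    have := ENNReal.toReal_strict_mono (by simp) h2q
    rw [hα]
    simp only [ENNReal.toReal_inv] at this ⊢
    norm_num at this
    linarith
  have hβpos : 0 < β := by
    have h2p : (2:ℝ≥0∞)⁻¹ < p⁻¹ := by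
      rw [ENNReal.inv_lt_inv]
      exact hp2
    have hpinvt : p⁻¹ ≠ ∞ := ENNReal.inv_ne_top.2 (by positivity)
    have := ENNReal.toReal_strict_mono hpinvt h2p
    rw [hβ]
    simp only [ENNReal.toReal_inv] at this ⊢
    norm_num at this
    linarith
  have hsum : 0 < α + β := by linarith
  have hθβ : θ * β = (1-θ) * α := by
    rw [hα, hβ]
    linear_combination 2 * hpqθ
  have hαeq : α = θ * (α + β) := by linear_combination -hθβ
  have hβeq : β = (1-θ) * (α + β) := by linear_combination hθβ
  set R : ℝ := (np / nq) ^ (α + β)⁻¹ with hRdef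
  have hdivpos : 0 < np / nq := div_pos hnp0 hnq0
  have hR : 0 < R := Real.rpow_pos_of_pos hdivpos _
  have hRα : R ^ α = (np / nq) ^ θ := by
    rw [hRdef, ← Real.rpow_mul hdivpos.le]
    congr 1
    rw [inv_mul_eq_div, div_eq_iff hsum.ne']
    linarith [hαeq]
  have hRβ : R ^ (-β) = (np / nq) ^ (θ - 1) := by
    rw [hRdef, ← Real.rpow_mul hdivpos.le]
    congr 1
    rw [inv_mul_eq_div, div_eq_iff hsum.ne']
    linarith [hβeq]
  have hprod1 : nq * (np/nq) ^ θ = np ^ θ * nq ^ (1-θ) := by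
    rw [Real.div_rpow hnp0.le hnq0.le, Real.rpow_sub hnq0, Real.rpow_one]
    have h2 : (0:ℝ) < nq ^ θ := Real.rpow_pos_of_pos hnq0 θ
    field_simp
  have hprod2 : np * (np/nq) ^ (θ-1) = np ^ θ * nq ^ (1-θ) := by
    rw [Real.div_rpow hnp0.le hnq0.le, Real.rpow_sub hnp0, Real.rpow_sub hnq0,
      Real.rpow_one, Real.rpow_one]
    have h2 : (0:ℝ) < nq ^ θ := Real.rpow_pos_of_pos hnq0 θ
    have h3 : (0:ℝ) < np ^ θ := Real.rpow_pos_of_pos hnp0 θ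
    have hq1 : nq ^ (1-θ) * nq ^ θ = nq := by
      rw [← Real.rpow_add hnq0]
      norm_num
    field_simp
    linear_combination (-1) * hq1
  set X := ENNReal.ofReal (np ^ θ * nq ^ (1-θ)) with hX
  have hpoint : ∀ ξ : E2, (‖v ξ‖₊ : ℝ≥0∞)
      ≤ ENNReal.ofReal (2*π)⁻¹ * ((A + B) * X) := by
    intro ξ
    have hstep1 : (‖v ξ‖₊ : ℝ≥0∞) ≤ ENNReal.ofReal (2*π)⁻¹ *
        ∫⁻ η, (‖w η‖₊ : ℝ≥0∞) * (‖ξ - η‖₊ : ℝ≥0∞)⁻¹ ∂volume := by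
      rw [hv ξ, nnnorm_smul, ENNReal.coe_mul]
      have hc : (‖(2*π)⁻¹‖₊ : ℝ≥0∞) = ENNReal.ofReal (2*π)⁻¹ := by
        rw [← ofReal_norm_eq_coe_nnnorm, Real.norm_eq_abs, abs_of_nonneg (by positivity)]
      rw [hc]
      refine mul_le_mul_right ?_ _
      refine le_trans (enorm_integral_le_lintegral_enorm _) (le_of_eq ?_)
      refine lintegral_congr_ae ?_
      have hne : ∀ᵐ η : E2 ∂volume, η ≠ ξ := by
        refine (ae_iff).2 ?_
        have hset : {η : E2 | ¬ η ≠ ξ} = {ξ} := by ext; simp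
        rw [hset]
        exact measure_singleton ξ
      filter_upwards [hne] with η hη
      exact enorm_integrand w ξ η hη
    have h1 : A * eLpNorm w q volume * ENNReal.ofReal (R ^ (1 - 2 * (q⁻¹).toReal))
        = A * X := by
      rw [hNq, mul_assoc, ← ENNReal.ofReal_mul hnq0.le, hX]
      congr 2
      rw [← hα, hRα]
      exact hprod1
    have h2 : B * eLpNorm w p volume * ENNReal.ofReal (R ^ (1 - 2 * (p⁻¹).toReal))
        = B * X := by
      rw [hNp, mul_assoc, ← ENNReal.ofReal_mul hnp0.le, hX]
      congr 2
      rw [show 1 - 2 * (p⁻¹).toReal = -β by rw [hβ]; ring, hRβ]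
      exact hprod2
    have hI : ∫⁻ η, (‖w η‖₊ : ℝ≥0∞) * (‖ξ - η‖₊ : ℝ≥0∞)⁻¹ ∂volume ≤ (A + B) * X := by
      rw [← lintegral_add_compl (fun η => (‖w η‖₊ : ℝ≥0∞) * (‖ξ - η‖₊ : ℝ≥0∞)⁻¹)
        (measurableSet_ball (x := ξ) (ε := R))]
      calc (∫⁻ η in ball ξ R, (‖w η‖₊ : ℝ≥0∞) * (‖ξ - η‖₊ : ℝ≥0∞)⁻¹ ∂volume)
            + ∫⁻ η in (ball ξ R)ᶜ, (‖w η‖₊ : ℝ≥0∞) * (‖ξ - η‖₊ : ℝ≥0∞)⁻¹ ∂volume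
          ≤ A * eLpNorm w q volume * ENNReal.ofReal (R ^ (1 - 2 * (q⁻¹).toReal))
            + B * eLpNorm w p volume * ENNReal.ofReal (R ^ (1 - 2 * (p⁻¹).toReal)) :=
            add_le_add (hnear w hw.aemeasurable R hR ξ) (hfar w hw.aemeasurable R hR ξ)
        _ = A * X + B * X := by rw [h1, h2]
        _ = (A + B) * X := by ring
    exact le_trans hstep1 (mul_le_mul_right hI _)
  have hXM : ENNReal.ofReal (2*π)⁻¹ * ((A + B) * X)
      ≤ ENNReal.ofReal C * eLpNorm w p volume ^ θ * eLpNorm w q volume ^ (1-θ) := by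
    have hC' : ENNReal.ofReal (2*π)⁻¹ * (A+B) ≤ ENNReal.ofReal C := by
      rw [hC]
      calc ENNReal.ofReal (2*π)⁻¹ * (A+B)
          = ENNReal.ofReal ((ENNReal.ofReal (2*π)⁻¹ * (A+B)).toReal) :=
            (ENNReal.ofReal_toReal hXt).symm
        _ ≤ _ := ENNReal.ofReal_le_ofReal (by linarith)
    have hXsplit : ENNReal.ofReal C * eLpNorm w p volume ^ θ * eLpNorm w q volume ^ (1-θ)
        = ENNReal.ofReal C * X := by
      rw [hNp, hNq, ENNReal.ofReal_rpow_of_pos hnp0, ENNReal.ofReal_rpow_of_pos hnq0, hX,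
        ENNReal.ofReal_mul (Real.rpow_nonneg hnp0.le _), mul_assoc]
    rw [hXsplit]
    calc ENNReal.ofReal (2*π)⁻¹ * ((A + B) * X)
        = (ENNReal.ofReal (2*π)⁻¹ * (A+B)) * X := by ring
      _ ≤ ENNReal.ofReal C * X := mul_le_mul_left hC' _
  have hbound : ∀ ξ : E2, (‖v ξ‖₊ : ℝ≥0∞)
      ≤ ENNReal.ofReal C * eLpNorm w p volume ^ θ * eLpNorm w q volume ^ (1-θ) :=
    fun ξ => (hpoint ξ).trans hXM
  have heLp : eLpNorm v ⊤ volume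
      ≤ ENNReal.ofReal C * eLpNorm w p volume ^ θ * eLpNorm w q volume ^ (1-θ) := by
    rw [eLpNorm_exponent_top]
    exact essSup_le_of_ae_le _ (Filter.Eventually.of_forall hbound)
  refine ⟨⟨hvm.aestronglyMeasurable, lt_of_le_of_lt heLp ?_⟩, heLp⟩
  refine ENNReal.mul_lt_top ?_ ?_
  · refine ENNReal.mul_lt_top ENNReal.ofReal_lt_top ?_
    exact ENNReal.rpow_lt_top_of_nonneg hθ0.le hNpt
  · exact ENNReal.rpow_lt_top_of_nonneg (by linarith) hNqt
end
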